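/- arXiv:0810.4596 — 2 statements merged into one kernel-verified Lean document; each statement's English description precedes it below -/
import Mathlib

section
/- In the Hamilton algebra Ha(N), the elements J_ij' := J_ij R + G_i F_j − G_j F_i of U(Ha(N)) satisfy [J_ij', J_kl'] = R·(δ_il J_jk' + δ_jk J_il' − δ_jl J_ik' − δ_ik J_jl'), i.e. they generate a copy of so(N) in U(Ha(N)) up to the central factor R. -/
open UniversalEnvelopingAlgebra

/-- Kronecker delta with values in a field `k`. -/
def kdelta (k : Type*) [Field k] {N : ℕ} (a b : Fin N) : k := if a = b then 1 else 0

private theorem lie_mul' {A : Type*} [Ring A] (a b c : A) :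
    ⁅a, b * c⁆ = ⁅a, b⁆ * c + b * ⁅a, c⁆ := by
  simp only [Ring.lie_def]; noncomm_ring

private theorem mul_lie' {A : Type*} [Ring A] (a b c : A) :
    ⁅a * b, c⁆ = a * ⁅b, c⁆ + ⁅a, c⁆ * b := by
  simp only [Ring.lie_def]; noncomm_ring

/-- In the Hamilton algebra `Ha(N)`, the elements `J'_ij = J_ij R + G_i F_j − G_j F_i`
satisfy the `so(N)` commutation relations up to the central factor `R`:
`⁅J'_ij, J'_kl⁆ = R·(δ_il J'_jk + δ_jk J'_il − δ_jl J'_ik − δ_ik J'_jl)`. -/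
theorem hamilton_virtual_copy_soN
    (k : Type*) [Field k] (g : Type*) [LieRing g] [LieAlgebra k g] (N : ℕ)
    (J : Fin N → Fin N → g) (G F : Fin N → g) (R : g)
    (hJa : ∀ i j, J i j = -J j i)
    (hJJ : ∀ i j l m, ⁅J i j, J l m⁆ =
      kdelta k i m • J j l + kdelta k j l • J i m - kdelta k j m • J i l - kdelta k i l • J j m)
    (hGF : ∀ i j, ⁅G i, F j⁆ = kdelta k i j • R)
    (hJG : ∀ i j l, ⁅J i j, G l⁆ = -(kdelta k i l • G j) + kdelta k j l • G i)
    (hJF : ∀ i j l, ⁅J i j, F l⁆ = -(kdelta k i l • F j) + kdelta k j l • F i)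
    (hGG : ∀ i j, ⁅G i, G j⁆ = 0) (hFF : ∀ i j, ⁅F i, F j⁆ = 0)
    (hJR : ∀ i j, ⁅J i j, R⁆ = 0) (hGR : ∀ i, ⁅G i, R⁆ = 0) (hFR : ∀ i, ⁅F i, R⁆ = 0) :
    ∀ i j l m,
      ⁅(fun a b => (ι k (J a b) : UniversalEnvelopingAlgebra k g) * ι k R
          + ι k (G a) * ι k (F b) - ι k (G b) * ι k (F a)) i j,
        (fun a b => (ι k (J a b) : UniversalEnvelopingAlgebra k g) * ι k R
          + ι k (G a) * ι k (F b) - ι k (G b) * ι k (F a)) l m⁆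
      = ι k R *
        (kdelta k i m • ((fun a b => (ι k (J a b) : UniversalEnvelopingAlgebra k g) * ι k R
            + ι k (G a) * ι k (F b) - ι k (G b) * ι k (F a)) j l)
         + kdelta k j l • ((fun a b => (ι k (J a b) : UniversalEnvelopingAlgebra k g) * ι k R
            + ι k (G a) * ι k (F b) - ι k (G b) * ι k (F a)) i m)
         - kdelta k j m • ((fun a b => (ι k (J a b) : UniversalEnvelopingAlgebra k g) * ι k R
            + ι k (G a) * ι k (F b) - ι k (G b) * ι k (F a)) i l)
         - kdelta k i l • ((fun a b => (ι k (J a b) : UniversalEnvelopingAlgebra k g) * ι k R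
            + ι k (G a) * ι k (F b) - ι k (G b) * ι k (F a)) j m)) := by
  intro i j l m
  letI : LieRing (UniversalEnvelopingAlgebra k g) := LieRing.ofAssociativeRing
  have key : ∀ x y : g, ⁅(ι k x : UniversalEnvelopingAlgebra k g), ι k y⁆ = ι k ⁅x, y⁆ :=
    fun x y => ((ι k).map_lie x y).symm
  have bJJ : ∀ a b c d, ⁅(ι k (J a b) : UniversalEnvelopingAlgebra k g), ι k (J c d)⁆ =
      kdelta k a d • ι k (J b c) + kdelta k b c • ι k (J a d)
        - kdelta k b d • ι k (J a c) - kdelta k a c • ι k (J b d) := by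
    intro a b c d; rw [key, hJJ]; simp
  have bGF : ∀ a b, ⁅(ι k (G a) : UniversalEnvelopingAlgebra k g), ι k (F b)⁆ =
      kdelta k a b • ι k R := by
    intro a b; rw [key, hGF]; simp
  have bFG : ∀ a b, ⁅(ι k (F a) : UniversalEnvelopingAlgebra k g), ι k (G b)⁆ =
      -(kdelta k b a • ι k R) := by
    intro a b; rw [← lie_skew, bGF]
  have bJG : ∀ a b c, ⁅(ι k (J a b) : UniversalEnvelopingAlgebra k g), ι k (G c)⁆ =
      -(kdelta k a c • ι k (G b)) + kdelta k b c • ι k (G a) := by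
    intro a b c; rw [key, hJG]; simp
  have bJF : ∀ a b c, ⁅(ι k (J a b) : UniversalEnvelopingAlgebra k g), ι k (F c)⁆ =
      -(kdelta k a c • ι k (F b)) + kdelta k b c • ι k (F a) := by
    intro a b c; rw [key, hJF]; simp
  have bGJ : ∀ a b c, ⁅(ι k (G c) : UniversalEnvelopingAlgebra k g), ι k (J a b)⁆ =
      -(-(kdelta k a c • ι k (G b)) + kdelta k b c • ι k (G a)) := by
    intro a b c; rw [← lie_skew, bJG]
  have bFJ : ∀ a b c, ⁅(ι k (F c) : UniversalEnvelopingAlgebra k g), ι k (J a b)⁆ =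
      -(-(kdelta k a c • ι k (F b)) + kdelta k b c • ι k (F a)) := by
    intro a b c; rw [← lie_skew, bJF]
  have bGG : ∀ a b, ⁅(ι k (G a) : UniversalEnvelopingAlgebra k g), ι k (G b)⁆ = 0 := by
    intro a b; rw [key, hGG]; simp
  have bFF : ∀ a b, ⁅(ι k (F a) : UniversalEnvelopingAlgebra k g), ι k (F b)⁆ = 0 := by
    intro a b; rw [key, hFF]; simp
  have bJR : ∀ a b, ⁅(ι k (J a b) : UniversalEnvelopingAlgebra k g), ι k R⁆ = 0 := by
    intro a b; rw [key, hJR]; simp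
  have bGR : ∀ a, ⁅(ι k (G a) : UniversalEnvelopingAlgebra k g), ι k R⁆ = 0 := by
    intro a; rw [key, hGR]; simp
  have bFR : ∀ a, ⁅(ι k (F a) : UniversalEnvelopingAlgebra k g), ι k R⁆ = 0 := by
    intro a; rw [key, hFR]; simp
  have bRJ : ∀ a b, ⁅(ι k R : UniversalEnvelopingAlgebra k g), ι k (J a b)⁆ = 0 := by
    intro a b; rw [← lie_skew, bJR, neg_zero]
  have bRG : ∀ a, ⁅(ι k R : UniversalEnvelopingAlgebra k g), ι k (G a)⁆ = 0 := by
    intro a; rw [← lie_skew, bGR, neg_zero]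
  have bRF : ∀ a, ⁅(ι k R : UniversalEnvelopingAlgebra k g), ι k (F a)⁆ = 0 := by
    intro a; rw [← lie_skew, bFR, neg_zero]
  -- centrality of R as commutation rules
  have cJR : ∀ a b, (ι k (J a b) : UniversalEnvelopingAlgebra k g) * ι k R
      = ι k R * ι k (J a b) := by
    intro a b; have := bJR a b; rw [Ring.lie_def, sub_eq_zero] at this; exact this
  have cGR : ∀ a, (ι k (G a) : UniversalEnvelopingAlgebra k g) * ι k R
      = ι k R * ι k (G a) := by
    intro a; have := bGR a; rw [Ring.lie_def, sub_eq_zero] at this; exact this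
  have cFR : ∀ a, (ι k (F a) : UniversalEnvelopingAlgebra k g) * ι k R
      = ι k R * ι k (F a) := by
    intro a; have := bFR a; rw [Ring.lie_def, sub_eq_zero] at this; exact this
  have cJR' : ∀ a b (x : UniversalEnvelopingAlgebra k g),
      ι k (J a b) * (ι k R * x) = ι k R * (ι k (J a b) * x) := by
    intro a b x; rw [← mul_assoc, cJR, mul_assoc]
  have cGR' : ∀ a (x : UniversalEnvelopingAlgebra k g),
      ι k (G a) * (ι k R * x) = ι k R * (ι k (G a) * x) := by
    intro a x; rw [← mul_assoc, cGR, mul_assoc]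
  have cFR' : ∀ a (x : UniversalEnvelopingAlgebra k g),
      ι k (F a) * (ι k R * x) = ι k R * (ι k (F a) * x) := by
    intro a x; rw [← mul_assoc, cFR, mul_assoc]
  simp only [lie_add, add_lie, lie_sub, sub_lie, lie_mul', mul_lie', lie_self,
    bJJ, bGF, bFG, bJG, bJF, bGJ, bFJ, bGG, bFF, bJR, bGR, bFR, bRJ, bRG, bRF,
    zero_mul, mul_zero, add_zero, zero_add, neg_zero, sub_zero, zero_sub,
    smul_mul_assoc, mul_smul_comm, smul_add, smul_sub, smul_neg, neg_mul, mul_neg,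
    neg_add, neg_neg, neg_sub,
    mul_add, add_mul, mul_sub, sub_mul, mul_assoc,
    cJR', cGR', cFR', cJR, cGR, cFR]
  match_scalars <;> simp [kdelta, eq_comm]
end

section
/- For the Hamilton algebra Ha(3) (N = 3), the element C := (J_12')² + (J_13')² + (J_23')², where J_ij' = J_ij R + G_i F_j − G_j F_i, is a central element of the universal enveloping algebra U(Ha(3)). -/
open UniversalEnvelopingAlgebra

attribute [local instance 100] LieRing.ofAssociativeRing

lemma kdelta_symm (k : Type*) [Field k] {N : ℕ} (a b : Fin N) :
    kdelta k a b = kdelta k b a := by simp [kdelta, eq_comm]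

lemma expand7 {A : Type*} [Ring A] (y p q r s t u : A) :
    y * (p*q + r*s - t*u) - (p*q + r*s - t*u) * y
    = (y*p - p*y)*q + p*(y*q - q*y) + ((y*r - r*y)*s + r*(y*s - s*y))
      - ((y*t - t*y)*u + t*(y*u - u*y)) := by noncomm_ring

lemma sq_comm {A : Type*} [Ring A] {y b : A} (h : y*b - b*y = 0) : y * b^2 - b^2 * y = 0 := by
  have e : y * b = b * y := by rwa [sub_eq_zero] at h
  rw [pow_two, ← mul_assoc, e, mul_assoc, e, ← mul_assoc]
  exact sub_self _

lemma rot_comm {A : Type*} [Ring A] {y b c : A} (h1 : y*b - b*y = -c) (h2 : y*c - c*y = b) :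
    (y * b^2 - b^2 * y) + (y * c^2 - c^2 * y) = 0 := by
  have e1 : y * b = -c + b * y := sub_eq_iff_eq_add.mp h1
  have e2 : y * c = b + c * y := sub_eq_iff_eq_add.mp h2
  have k1 : y * b^2 = b^2 * y - c*b - b*c := by
    rw [pow_two, ← mul_assoc, e1, add_mul, mul_assoc, e1]; noncomm_ring
  have k2 : y * c^2 = c^2 * y + b*c + c*b := by
    rw [pow_two, ← mul_assoc, e2, add_mul, mul_assoc, e2]; noncomm_ring
  rw [k1, k2]; noncomm_ring

lemma split3 {A : Type*} [Ring A] (y a b d : A) :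
    y*(a+b+d) - (a+b+d)*y = (y*a - a*y) + (y*b - b*y) + (y*d - d*y) := by noncomm_ring

set_option synthInstance.maxHeartbeats 1000000 in
lemma uea_adjoin_top (k : Type*) [CommRing k] (g : Type*) [LieRing g] [LieAlgebra k g] :
    Algebra.adjoin k (Set.range (ι k : g →ₗ⁅k⁆ UniversalEnvelopingAlgebra k g)) = ⊤ := by
  set S := Algebra.adjoin k (Set.range (ι k : g →ₗ⁅k⁆ UniversalEnvelopingAlgebra k g)) with hS
  let ι' : g →ₗ⁅k⁆ S :=
    { toFun := fun x => ⟨ι k x, Algebra.subset_adjoin ⟨x, rfl⟩⟩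
      map_add' := fun x y => by ext; simp
      map_smul' := fun c x => by ext; simp
      map_lie' := fun {x y} => by
        ext
        show (ι k ⁅x, y⁆ : UniversalEnvelopingAlgebra k g) = _
        rw [LieHom.map_lie, Ring.lie_def]
        simp [Ring.lie_def] }
  have h : S.val.comp (lift k ι') = AlgHom.id k _ := by
    ext x
    simp [lift_ι_apply, ι']
  rw [eq_top_iff]
  intro u _
  have : S.val ((lift k ι') u) = u := by rw [← AlgHom.comp_apply, h]; rfl
  rw [← this]
  exact ((lift k ι') u).2

/-- For the Hamilton algebra `Ha(3)`, the element
`C = (J'_12)² + (J'_13)² + (J'_23)²`, with `J'_ij = J_ij R + G_i F_j − G_j F_i`,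
is a central element of `U(Ha(3))`. -/
theorem hamilton3_casimir_central
    (k : Type*) [Field k] (g : Type*) [LieRing g] [LieAlgebra k g]
    (J : Fin 3 → Fin 3 → g) (G F : Fin 3 → g) (R : g)
    (hJa : ∀ i j, J i j = -J j i)
    (hJJ : ∀ i j l m, ⁅J i j, J l m⁆ =
      kdelta k i m • J j l + kdelta k j l • J i m - kdelta k j m • J i l - kdelta k i l • J j m)
    (hGF : ∀ i j, ⁅G i, F j⁆ = kdelta k i j • R)
    (hJG : ∀ i j l, ⁅J i j, G l⁆ = -(kdelta k i l • G j) + kdelta k j l • G i)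
    (hJF : ∀ i j l, ⁅J i j, F l⁆ = -(kdelta k i l • F j) + kdelta k j l • F i)
    (hGG : ∀ i j, ⁅G i, G j⁆ = 0) (hFF : ∀ i j, ⁅F i, F j⁆ = 0)
    (hJR : ∀ i j, ⁅J i j, R⁆ = 0) (hGR : ∀ i, ⁅G i, R⁆ = 0) (hFR : ∀ i, ⁅F i, R⁆ = 0)
    -- the listed elements span `Ha(3)`
    (hspan : Submodule.span k
      ({J 0 1, J 0 2, J 1 2, G 0, G 1, G 2, F 0, F 1, F 2, R} : Set g) = ⊤) :
    ((fun a b => (ι k (J a b) : UniversalEnvelopingAlgebra k g) * ι k R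
        + ι k (G a) * ι k (F b) - ι k (G b) * ι k (F a)) 0 1) ^ 2
    + ((fun a b => (ι k (J a b) : UniversalEnvelopingAlgebra k g) * ι k R
        + ι k (G a) * ι k (F b) - ι k (G b) * ι k (F a)) 0 2) ^ 2
    + ((fun a b => (ι k (J a b) : UniversalEnvelopingAlgebra k g) * ι k R
        + ι k (G a) * ι k (F b) - ι k (G b) * ι k (F a)) 1 2) ^ 2
      ∈ Subalgebra.center k (UniversalEnvelopingAlgebra k g) := by
  set Jp : Fin 3 → Fin 3 → UniversalEnvelopingAlgebra k g :=
    (fun a b => (ι k (J a b) : UniversalEnvelopingAlgebra k g) * ι k R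
        + ι k (G a) * ι k (F b) - ι k (G b) * ι k (F a)) with hJp
  set C : UniversalEnvelopingAlgebra k g := Jp 0 1 ^ 2 + Jp 0 2 ^ 2 + Jp 1 2 ^ 2 with hC
  -- basic commutator identity in U
  have comU : ∀ x y : g, ι k x * ι k y - ι k y * ι k x
      = (ι k ⁅x, y⁆ : UniversalEnvelopingAlgebra k g) := by
    intro x y; rw [LieHom.map_lie, Ring.lie_def]
  -- R is central in g
  have hRall : ∀ x : g, ⁅x, R⁆ = 0 := by
    let φ : g →ₗ[k] g :=
      { toFun := fun x => ⁅x, R⁆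
        map_add' := fun x y => add_lie x y R
        map_smul' := fun c x => smul_lie c x R }
    have hle : Submodule.span k
        ({J 0 1, J 0 2, J 1 2, G 0, G 1, G 2, F 0, F 1, F 2, R} : Set g)
        ≤ LinearMap.ker φ := by
      rw [Submodule.span_le]
      rintro z hz
      simp only [Set.mem_insert_iff, Set.mem_singleton_iff] at hz
      rcases hz with rfl|rfl|rfl|rfl|rfl|rfl|rfl|rfl|rfl|rfl <;>
        simp [φ, LinearMap.mem_ker, hJR, hGR, hFR]
    intro x
    have hx : x ∈ LinearMap.ker φ := hle (hspan ▸ Submodule.mem_top)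
    simpa [φ] using hx
  have hRz : ∀ x : g, ⁅R, x⁆ = 0 := fun x => by rw [← lie_skew, hRall, neg_zero]
  have hRx : ∀ x : g, ι k R * ι k x = ι k x * ι k R := by
    intro x
    have h := comU x R
    rw [hRall, map_zero, sub_eq_zero] at h
    exact h.symm
  -- skew brackets
  have hGJ : ∀ c a b, ⁅G c, J a b⁆ = kdelta k a c • G b - kdelta k b c • G a := by
    intro c a b; rw [← lie_skew, hJG]; module
  have hFJ : ∀ c a b, ⁅F c, J a b⁆ = kdelta k a c • F b - kdelta k b c • F a := by
    intro c a b; rw [← lie_skew, hJF]; module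
  have hFG : ∀ c a, ⁅F c, G a⁆ = -(kdelta k a c • R) := by
    intro c a; rw [← lie_skew, hGF]
  -- G's commute with Jp
  have hGJp : ∀ c a b, ι k (G c) * Jp a b - Jp a b * ι k (G c) = 0 := by
    intro c a b
    simp only [hJp]
    rw [expand7, comU, comU, comU, comU, comU, comU, hGJ, hGR, hGG, hGF, hGG, hGF]
    simp only [map_sub, map_smul, map_zero, smul_mul_assoc, mul_smul_comm,
      mul_zero, zero_mul, kdelta_symm k a c, kdelta_symm k b c, sub_mul, add_mul, neg_mul]
    module
  -- F's commute with Jp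
  have hFJp : ∀ c a b, ι k (F c) * Jp a b - Jp a b * ι k (F c) = 0 := by
    intro c a b
    simp only [hJp]
    rw [expand7, comU, comU, comU, comU, comU, comU, hFJ, hFR, hFG, hFF, hFG, hFF]
    simp only [map_sub, map_smul, map_neg, map_zero, smul_mul_assoc,
      mul_smul_comm, mul_zero, zero_mul, hRx, kdelta_symm k a c, kdelta_symm k b c, sub_mul, add_mul, neg_mul]
    module
  -- R commutes with Jp
  have hRJp : ∀ a b, ι k R * Jp a b - Jp a b * ι k R = 0 := by
    intro a b
    simp only [hJp]
    rw [expand7, comU, comU, comU, comU, comU, comU, hRz, hRz, hRz, hRz, hRz, hRz]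
    simp
  -- concrete J-commutators with Jp
  have A1 : ι k (J 0 1) * Jp 0 1 - Jp 0 1 * ι k (J 0 1) = 0 := by
    simp only [hJp]
    rw [expand7, comU, comU, comU, comU, comU, comU, lie_self, hJR, hJG, hJG, hJF, hJF]
    simp [kdelta]
    try noncomm_ring
    try abel
  have A2 : ι k (J 0 1) * Jp 0 2 - Jp 0 2 * ι k (J 0 1) = -Jp 1 2 := by
    simp only [hJp]
    rw [expand7, comU, comU, comU, comU, comU, comU, hJJ, hJR, hJG, hJG, hJF, hJF]
    simp [kdelta]
    try noncomm_ring
    try abel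
    try noncomm_ring
    try abel
  have A3 : ι k (J 0 1) * Jp 1 2 - Jp 1 2 * ι k (J 0 1) = Jp 0 2 := by
    simp only [hJp]
    rw [expand7, comU, comU, comU, comU, comU, comU, hJJ, hJR, hJG, hJG, hJF, hJF]
    simp [kdelta]
    try noncomm_ring
    try abel
    try noncomm_ring
    try abel
  have B1 : ι k (J 0 2) * Jp 0 1 - Jp 0 1 * ι k (J 0 2) = Jp 1 2 := by
    simp only [hJp]
    rw [expand7, comU, comU, comU, comU, comU, comU, hJJ, hJR, hJG, hJG, hJF, hJF]
    simp [kdelta, hJa 2 1]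
    try noncomm_ring
    try abel
  have B2 : ι k (J 0 2) * Jp 0 2 - Jp 0 2 * ι k (J 0 2) = 0 := by
    simp only [hJp]
    rw [expand7, comU, comU, comU, comU, comU, comU, lie_self, hJR, hJG, hJG, hJF, hJF]
    simp [kdelta]
    try noncomm_ring
    try abel
  have B3 : ι k (J 0 2) * Jp 1 2 - Jp 1 2 * ι k (J 0 2) = -Jp 0 1 := by
    simp only [hJp]
    rw [expand7, comU, comU, comU, comU, comU, comU, hJJ, hJR, hJG, hJG, hJF, hJF]
    simp [kdelta]
    try noncomm_ring
    try abel
    try noncomm_ring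
    try abel
  have C1 : ι k (J 1 2) * Jp 0 1 - Jp 0 1 * ι k (J 1 2) = -Jp 0 2 := by
    simp only [hJp]
    rw [expand7, comU, comU, comU, comU, comU, comU, hJJ, hJR, hJG, hJG, hJF, hJF]
    simp [kdelta, hJa 2 0]
    try noncomm_ring
    try abel
  have C2 : ι k (J 1 2) * Jp 0 2 - Jp 0 2 * ι k (J 1 2) = Jp 0 1 := by
    simp only [hJp]
    rw [expand7, comU, comU, comU, comU, comU, comU, hJJ, hJR, hJG, hJG, hJF, hJF]
    simp [kdelta, hJa 1 0]
    try noncomm_ring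
    try abel
  have C3 : ι k (J 1 2) * Jp 1 2 - Jp 1 2 * ι k (J 1 2) = 0 := by
    simp only [hJp]
    rw [expand7, comU, comU, comU, comU, comU, comU, lie_self, hJR, hJG, hJG, hJF, hJF]
    simp [kdelta]
    try noncomm_ring
    try abel
  -- every generator commutes with C
  have hcom : ∀ x : g, ι k x * C - C * ι k x = 0 := by
    let ψ : g →ₗ[k] UniversalEnvelopingAlgebra k g :=
      { toFun := fun x => ι k x * C - C * ι k x
        map_add' := fun x y => by simp only [map_add]; noncomm_ring
        map_smul' := fun c x => by
          simp only [map_smul, RingHom.id_apply, smul_mul_assoc, mul_smul_comm, smul_sub] }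
    have key : ∀ y : UniversalEnvelopingAlgebra k g,
        (y * Jp 0 1 - Jp 0 1 * y = 0) → (y * Jp 0 2 - Jp 0 2 * y = 0) →
        (y * Jp 1 2 - Jp 1 2 * y = 0) → y * C - C * y = 0 := by
      intro y h1 h2 h3
      rw [hC, split3, sq_comm h1, sq_comm h2, sq_comm h3]
      abel
    have hle : Submodule.span k
        ({J 0 1, J 0 2, J 1 2, G 0, G 1, G 2, F 0, F 1, F 2, R} : Set g)
        ≤ LinearMap.ker ψ := by
      rw [Submodule.span_le]
      rintro z hz
      simp only [Set.mem_insert_iff, Set.mem_singleton_iff] at hz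
      rw [SetLike.mem_coe, LinearMap.mem_ker]
      rcases hz with rfl|rfl|rfl|rfl|rfl|rfl|rfl|rfl|rfl|rfl
      · show ι k (J 0 1) * C - C * ι k (J 0 1) = 0
        rw [hC, split3, sq_comm A1, zero_add]
        exact rot_comm A2 A3
      · show ι k (J 0 2) * C - C * ι k (J 0 2) = 0
        rw [hC, split3, sq_comm B2, add_zero, add_comm]
        exact rot_comm B3 B1
      · show ι k (J 1 2) * C - C * ι k (J 1 2) = 0
        rw [hC, split3, sq_comm C3, add_zero]
        exact rot_comm C1 C2
      · exact key _ (hGJp 0 0 1) (hGJp 0 0 2) (hGJp 0 1 2)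
      · exact key _ (hGJp 1 0 1) (hGJp 1 0 2) (hGJp 1 1 2)
      · exact key _ (hGJp 2 0 1) (hGJp 2 0 2) (hGJp 2 1 2)
      · exact key _ (hFJp 0 0 1) (hFJp 0 0 2) (hFJp 0 1 2)
      · exact key _ (hFJp 1 0 1) (hFJp 1 0 2) (hFJp 1 1 2)
      · exact key _ (hFJp 2 0 1) (hFJp 2 0 2) (hFJp 2 1 2)
      · exact key _ (hRJp 0 1) (hRJp 0 2) (hRJp 1 2)
    intro x
    have hx : x ∈ LinearMap.ker ψ := hle (hspan ▸ Submodule.mem_top)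
    rw [LinearMap.mem_ker] at hx
    exact hx
  rw [Subalgebra.mem_center_iff]
  intro u
  have hu : u ∈ Algebra.adjoin k
      (Set.range (ι k : g →ₗ⁅k⁆ UniversalEnvelopingAlgebra k g)) := by
    rw [uea_adjoin_top]; trivial
  refine Algebra.adjoin_induction (fun x hx => ?_) (fun r => ?_)
    (fun a b _ _ ha hb => ?_) (fun a b _ _ ha hb => ?_) hu
  · obtain ⟨x, rfl⟩ := hx
    have h := hcom x
    rw [sub_eq_zero] at h
    exact h
  · exact Algebra.commutes r C
  · rw [add_mul, ha, hb, mul_add]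
  · rw [mul_assoc, hb, ← mul_assoc, ha, mul_assoc]
end
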